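/- For the N-qubit one-axis twisted state |ψ⟩ = exp(-iθ J_x²/2)|1⟩^{⊗N} (N ≥ 2), the two-spin correlation satisfies ⟨σ_{1z}σ_{2z}⟩ = (1 + cos^{N-2}θ)/2. -/

import Mathlib

open Matrix Complex Finset

noncomputable section OneAxisTwisting

/-- Pauli x matrix in the basis `{|0⟩, |1⟩}`. -/
def pauliX : Matrix (Fin 2) (Fin 2) ℂ := !![0, 1; 1, 0]

/-- Pauli z matrix in the basis `{|0⟩, |1⟩}`. -/
def pauliZ : Matrix (Fin 2) (Fin 2) ℂ := !![1, 0; 0, -1]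

/-- The single-qubit operator `m` acting on site `k` of `N` qubits (identity elsewhere),
as a matrix on the computational basis indexed by `Fin N → Fin 2`. -/
def siteOp (N : ℕ) (k : Fin N) (m : Matrix (Fin 2) (Fin 2) ℂ) :
    Matrix (Fin N → Fin 2) (Fin N → Fin 2) ℂ :=
  Matrix.of fun s t =>
    m (s k) (t k) * ∏ j ∈ Finset.univ.erase k, (if s j = t j then (1 : ℂ) else 0)

/-- The collective spin operator `J_x = (1/2) Σ_k σ_{k,x}`. -/
def Jx (N : ℕ) : Matrix (Fin N → Fin 2) (Fin N → Fin 2) ℂ :=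
  (1 / 2 : ℂ) • ∑ k : Fin N, siteOp N k pauliX

/-- The all-down state `|1⟩^{⊗N}` as a vector. -/
def allDown (N : ℕ) : (Fin N → Fin 2) → ℂ :=
  fun s => if s = (fun _ => 1) then 1 else 0

/-- The one-axis twisted state `exp(-iθ J_x²/2) |1⟩^{⊗N}`. -/
def oneAxisTwisted (N : ℕ) (θ : ℝ) : (Fin N → Fin 2) → ℂ :=
  (NormedSpace.exp ((-(θ / 2 : ℂ) * Complex.I) • (Jx N * Jx N))).mulVec (allDown N)

/-- Expectation value `⟨ψ|O|ψ⟩` in the one-axis twisted state. -/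
def expVal (N : ℕ) (θ : ℝ) (O : Matrix (Fin N → Fin 2) (Fin N → Fin 2) ℂ) : ℂ :=
  star (oneAxisTwisted N θ) ⬝ᵥ O.mulVec (oneAxisTwisted N θ)


namespace OATaux

/-- eigenvalue character -/
def χ (a : Fin 2) : ℂ := if a = 0 then 1 else -1

lemma χ_zero : χ 0 = 1 := rfl
lemma χ_one : χ 1 = -1 := rfl
lemma χ_sq (a : Fin 2) : χ a * χ a = 1 := by fin_cases a <;> simp [χ]
lemma conj_χ (a : Fin 2) : (starRingEnd ℂ) (χ a) = χ a := by fin_cases a <;> simp [χ]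

def flip2 (a : Fin 2) : Fin 2 := 1 - a

lemma χ_flip2 (a : Fin 2) : χ (flip2 a) = - χ a := by fin_cases a <;> simp [χ, flip2]
lemma χ_mul_χ_flip2 (a : Fin 2) : χ a * χ (flip2 a) = -1 := by
  fin_cases a <;> simp [χ, flip2]

/-- Hadamard kernel entry -/
def w2 (a b : Fin 2) : ℂ := if a = 1 ∧ b = 1 then -1 else 1

lemma w2_comm (a b : Fin 2) : w2 a b = w2 b a := by
  fin_cases a <;> fin_cases b <;> simp [w2]
lemma w2_one (a : Fin 2) : w2 a 1 = χ a := by fin_cases a <;> simp [w2, χ]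
lemma one_w2 (a : Fin 2) : w2 1 a = χ a := by fin_cases a <;> simp [w2, χ]
lemma conj_w2 (a b : Fin 2) : (starRingEnd ℂ) (w2 a b) = w2 a b := by
  fin_cases a <;> fin_cases b <;> simp [w2]
lemma sum_w2_mul (a b : Fin 2) :
    ∑ u : Fin 2, w2 a u * w2 u b = if a = b then 2 else 0 := by
  fin_cases a <;> fin_cases b <;> simp [w2, Fin.sum_univ_two] <;> norm_num
lemma w2_flip2 (a b : Fin 2) : w2 (flip2 a) b = χ b * w2 a b := by
  fin_cases a <;> fin_cases b <;> simp [w2, flip2, χ]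

/-- normalization constant -/
def rt : ℂ := ((Real.sqrt 2)⁻¹ : ℝ)

lemma rt_sq : rt * rt = 2⁻¹ := by
  rw [rt, ← Complex.ofReal_mul, ← mul_inv, Real.mul_self_sqrt (by norm_num : (0:ℝ) ≤ 2)]
  norm_num

lemma conj_rt : (starRingEnd ℂ) rt = rt := Complex.conj_ofReal _

/-- Hadamard transform matrix -/
def W (N : ℕ) : Matrix (Fin N → Fin 2) (Fin N → Fin 2) ℂ :=
  Matrix.of fun s t => rt ^ N * ∏ j, w2 (s j) (t j)

lemma W_apply {N : ℕ} (s t : Fin N → Fin 2) :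
    W N s t = rt ^ N * ∏ j, w2 (s j) (t j) := rfl

lemma W_mul_W (N : ℕ) : W N * W N = 1 := by
  ext s t
  rw [Matrix.mul_apply]
  simp only [W_apply]
  have : ∀ u : Fin N → Fin 2,
      (rt ^ N * ∏ j, w2 (s j) (u j)) * (rt ^ N * ∏ j, w2 (u j) (t j))
      = (rt ^ N * rt ^ N) * ∏ j, (w2 (s j) (u j) * w2 (u j) (t j)) := by
    intro u; rw [Finset.prod_mul_distrib]; ring
  rw [Finset.sum_congr rfl fun u _ => this u, ← Finset.mul_sum]
  have hsum : (∑ u : Fin N → Fin 2, ∏ j, (w2 (s j) (u j) * w2 (u j) (t j)))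
      = ∏ j, (if s j = t j then (2:ℂ) else 0) := by
    rw [← Finset.sum_congr rfl fun u _ => rfl]
    rw [show (∏ j, (if s j = t j then (2:ℂ) else 0))
        = ∏ j, ∑ a : Fin 2, w2 (s j) a * w2 a (t j) from
      Finset.prod_congr rfl fun j _ => (sum_w2_mul (s j) (t j)).symm]
    rw [Finset.prod_univ_sum]
    rw [Fintype.piFinset_univ]
  rw [hsum]
  by_cases h : s = t
  · subst h
    rw [Matrix.one_apply_eq]
    simp only [if_pos rfl, if_true, eq_self_iff_true, Finset.prod_const, Finset.card_univ, Fintype.card_fin]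
    rw [show rt ^ N * rt ^ N * (2:ℂ) ^ N = (rt * rt * 2) ^ N by ring, rt_sq]
    norm_num
  · rw [Matrix.one_apply_ne h]
    obtain ⟨j, hj⟩ := Function.ne_iff.mp h
    have hz : (∏ j, if s j = t j then (2:ℂ) else 0) = 0 :=
      Finset.prod_eq_zero (Finset.mem_univ j) (if_neg hj)
    rw [hz, mul_zero]

lemma W_conjTranspose (N : ℕ) : (W N)ᴴ = W N := by
  ext s t
  rw [Matrix.conjTranspose_apply, W_apply, W_apply]
  rw [star_mul', star_pow]
  rw [show star rt = rt from conj_rt]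
  congr 1
  rw [show star (∏ j, w2 (t j) (s j)) = ∏ j, star (w2 (t j) (s j)) from star_prod _ _]
  exact Finset.prod_congr rfl fun j _ => by rw [show star (w2 (t j) (s j)) = w2 (t j) (s j) from conj_w2 _ _, w2_comm]

/-- flip coordinate `k` -/
def flipAt {N : ℕ} (k : Fin N) (s : Fin N → Fin 2) : Fin N → Fin 2 :=
  Function.update s k (flip2 (s k))

lemma flipAt_apply_self {N : ℕ} (k : Fin N) (s : Fin N → Fin 2) :
    flipAt k s k = flip2 (s k) := Function.update_self _ _ _

lemma flipAt_apply_ne {N : ℕ} (k j : Fin N) (s : Fin N → Fin 2) (h : j ≠ k) :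
    flipAt k s j = s j := Function.update_of_ne h _ _

lemma fin2_cases (a b : Fin 2) : b = a ∨ b = flip2 a := by
  fin_cases a <;> fin_cases b <;> simp [flip2]

lemma pauliX_flip (a : Fin 2) : pauliX a (flip2 a) = 1 := by
  fin_cases a <;> simp [pauliX, flip2] <;> rfl

lemma pauliX_self (a : Fin 2) : pauliX a a = 0 := by
  fin_cases a <;> simp [pauliX]

lemma pauliZ_self (a : Fin 2) : pauliZ a a = χ a := by
  fin_cases a <;> simp [pauliZ, χ]

lemma pauliZ_ne (a b : Fin 2) (h : a ≠ b) : pauliZ a b = 0 := by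
  fin_cases a <;> fin_cases b <;> simp_all [pauliZ]

lemma exists_mem_erase_ne {N : ℕ} {k : Fin N} {s t : Fin N → Fin 2}
    (hne : s ≠ t) (hk : s k = t k) : ∃ j ∈ Finset.univ.erase k, s j ≠ t j := by
  obtain ⟨j, hj⟩ := Function.ne_iff.mp hne
  refine ⟨j, Finset.mem_erase.mpr ⟨?_, Finset.mem_univ j⟩, hj⟩
  rintro rfl; exact hj hk

lemma siteOpX_apply {N : ℕ} (k : Fin N) (s u : Fin N → Fin 2) :
    siteOp N k pauliX s u = if u = flipAt k s then 1 else 0 := by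
  by_cases h : u = flipAt k s
  · subst h
    rw [if_pos rfl]
    show pauliX (s k) (flipAt k s k) * _ = 1
    rw [flipAt_apply_self, pauliX_flip]
    rw [one_mul]
    refine Finset.prod_eq_one fun j hj => ?_
    rw [flipAt_apply_ne _ _ _ (Finset.mem_erase.mp hj).1, if_pos rfl]
  · rw [if_neg h]
    show pauliX (s k) (u k) * _ = 0
    rcases fin2_cases (s k) (u k) with hk | hk
    · rw [hk, pauliX_self, zero_mul]
    · obtain ⟨j, hj, hne⟩ : ∃ j ∈ Finset.univ.erase k, s j ≠ u j := by
        by_contra hcon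
        push_neg at hcon
        apply h
        funext j
        by_cases hjk : j = k
        · subst hjk; rw [flipAt_apply_self]; exact hk
        · rw [flipAt_apply_ne _ _ _ hjk]
          exact (hcon j (Finset.mem_erase.mpr ⟨hjk, Finset.mem_univ j⟩)).symm
      have hz : (∏ j ∈ Finset.univ.erase k, if s j = u j then (1:ℂ) else 0) = 0 :=
        Finset.prod_eq_zero hj (if_neg hne)
      rw [hz, mul_zero]

lemma siteOpZ_eq {N : ℕ} (k : Fin N) :
    siteOp N k pauliZ = Matrix.diagonal (fun s => χ (s k)) := by
  ext s t
  show pauliZ (s k) (t k) * _ = _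
  by_cases h : s = t
  · subst h
    rw [Matrix.diagonal_apply_eq, pauliZ_self]
    rw [Finset.prod_congr rfl fun j _ => if_pos rfl, Finset.prod_const_one, mul_one]
  · rw [Matrix.diagonal_apply_ne _ h]
    by_cases hk : s k = t k
    · obtain ⟨j, hj, hne⟩ := exists_mem_erase_ne h hk
      have hz : (∏ j ∈ Finset.univ.erase k, if s j = t j then (1:ℂ) else 0) = 0 :=
        Finset.prod_eq_zero hj (if_neg hne)
      rw [hz, mul_zero]
    · rw [pauliZ_ne _ _ hk, zero_mul]

lemma prod_w2_update {N : ℕ} (s t : Fin N → Fin 2) (k : Fin N) (a : Fin 2) :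
    (∏ j, w2 (Function.update s k a j) (t j))
      = w2 a (t k) * ∏ j ∈ Finset.univ.erase k, w2 (s j) (t j) := by
  rw [← Finset.mul_prod_erase Finset.univ _ (Finset.mem_univ k)]
  rw [Function.update_self]
  congr 1
  refine Finset.prod_congr rfl fun j hj => ?_
  rw [Function.update_of_ne (Finset.mem_erase.mp hj).1]

lemma W_flipAt {N : ℕ} (k : Fin N) (s t : Fin N → Fin 2) :
    W N (flipAt k s) t = χ (t k) * W N s t := by
  rw [W_apply, W_apply, flipAt, prod_w2_update, w2_flip2]
  rw [← Finset.mul_prod_erase Finset.univ (fun j => w2 (s j) (t j)) (Finset.mem_univ k)]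
  ring

lemma siteOpX_mul_W {N : ℕ} (k : Fin N) :
    siteOp N k pauliX * W N = W N * Matrix.diagonal (fun t => χ (t k)) := by
  ext s t
  rw [Matrix.mul_apply, Matrix.mul_diagonal]
  rw [Finset.sum_congr rfl fun u _ => by rw [siteOpX_apply, ite_mul, one_mul, zero_mul]]
  rw [Finset.sum_ite_eq' Finset.univ (flipAt k s) (fun u => W N u t)]
  rw [if_pos (Finset.mem_univ _), W_flipAt]
  ring

/-- diagonal eigenvalue of Jx -/
def Λ {N : ℕ} (s : Fin N → Fin 2) : ℂ := (∑ j, χ (s j)) / 2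

lemma Jx_mul_W (N : ℕ) : Jx N * W N = W N * Matrix.diagonal (fun s => Λ s) := by
  rw [Jx, Matrix.smul_mul, Finset.sum_mul]
  rw [Finset.sum_congr rfl fun k _ => siteOpX_mul_W k]
  rw [← Finset.mul_sum]
  have : (∑ k : Fin N, Matrix.diagonal (fun t : Fin N → Fin 2 => χ (t k)))
      = Matrix.diagonal (fun t => ∑ k, χ (t k)) := by
    ext s t
    by_cases h : s = t
    · subst h; simp [Matrix.diagonal_apply_eq, Matrix.sum_apply]
    · simp [Matrix.sum_apply, Matrix.diagonal_apply_ne _ h]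
  rw [this, ← mul_smul_comm]
  congr 1
  ext s t
  by_cases h : s = t
  · subst h
    simp only [Matrix.smul_apply, Matrix.diagonal_apply_eq, Λ, smul_eq_mul]
    ring
  · simp [Matrix.diagonal_apply_ne _ h]

lemma Jx_eq (N : ℕ) : Jx N = W N * Matrix.diagonal (fun s => Λ s) * W N := by
  have h := Jx_mul_W N
  calc Jx N = Jx N * (W N * W N) := by rw [W_mul_W, Matrix.mul_one]
  _ = (Jx N * W N) * W N := by rw [Matrix.mul_assoc]
  _ = _ := by rw [h]

def cc (θ : ℝ) : ℂ := -(θ / 2 : ℂ) * Complex.I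

def ff (N : ℕ) (θ : ℝ) (s : Fin N → Fin 2) : ℂ := Complex.exp (cc θ * Λ s ^ 2)

lemma exp_eq (N : ℕ) (θ : ℝ) :
    NormedSpace.exp ((-(θ / 2 : ℂ) * Complex.I) • (Jx N * Jx N))
      = W N * Matrix.diagonal (ff N θ) * W N := by
  have hd : (-(θ / 2 : ℂ) * Complex.I) • (Jx N * Jx N)
      = W N * Matrix.diagonal (fun s => cc θ * Λ s ^ 2) * W N := by
    rw [Jx_eq]
    set D := Matrix.diagonal (fun s : Fin N → Fin 2 => Λ s) with hD
    have h2 : (W N * D * W N) * (W N * D * W N) = W N * (D * D) * W N := by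
      calc (W N * D * W N) * (W N * D * W N)
          = W N * D * ((W N * W N) * (D * W N)) := by simp only [Matrix.mul_assoc]
        _ = W N * (D * D) * W N := by
            rw [W_mul_W]
            simp only [Matrix.one_mul, Matrix.mul_assoc]
    rw [h2, ← smul_mul_assoc, ← mul_smul_comm]
    congr 2
    rw [hD, Matrix.diagonal_mul_diagonal]
    ext a b
    by_cases h : a = b
    · subst h
      simp only [Matrix.smul_apply, Matrix.diagonal_apply_eq, smul_eq_mul, cc]
      ring
    · simp [Matrix.diagonal_apply_ne _ h]
  rw [hd]
  let U : (Matrix (Fin N → Fin 2) (Fin N → Fin 2) ℂ)ˣ :=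
    ⟨W N, W N, W_mul_W N, W_mul_W N⟩
  have key := Matrix.exp_units_conj U (Matrix.diagonal fun s => cc θ * Λ s ^ 2)
  have hU : (U : Matrix (Fin N → Fin 2) (Fin N → Fin 2) ℂ) = W N := rfl
  have hUinv : ((U⁻¹ : (Matrix (Fin N → Fin 2) (Fin N → Fin 2) ℂ)ˣ) :
      Matrix (Fin N → Fin 2) (Fin N → Fin 2) ℂ) = W N := rfl
  rw [hU, hUinv] at key
  have h3 : NormedSpace.exp (fun s : Fin N → Fin 2 => cc θ * Λ s ^ 2) = ff N θ := by
    rw [Pi.exp_def]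
    funext s
    rw [ff, ← Complex.exp_eq_exp_ℂ]
  rw [key, Matrix.exp_diagonal, h3]

lemma dot_allDown {N : ℕ} (A : Matrix (Fin N → Fin 2) (Fin N → Fin 2) ℂ) :
    star (allDown N) ⬝ᵥ A.mulVec (allDown N) = A (fun _ => 1) (fun _ => 1) := by
  simp [Matrix.mulVec, dotProduct, allDown, apply_ite (star : ℂ → ℂ)]

lemma expVal_eq_entry (N : ℕ) (θ : ℝ) (O : Matrix (Fin N → Fin 2) (Fin N → Fin 2) ℂ) :
    expVal N θ O
      = ((W N * Matrix.diagonal (fun s => (starRingEnd ℂ) (ff N θ s)) * W N) * O *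
          (W N * Matrix.diagonal (ff N θ) * W N)) (fun _ => 1) (fun _ => 1) := by
  rw [expVal, oneAxisTwisted, exp_eq]
  set M := W N * Matrix.diagonal (ff N θ) * W N with hM
  have hMH : Mᴴ = W N * Matrix.diagonal (fun s => (starRingEnd ℂ) (ff N θ s)) * W N := by
    rw [hM, Matrix.conjTranspose_mul, Matrix.conjTranspose_mul, W_conjTranspose,
        Matrix.diagonal_conjTranspose, ← Matrix.mul_assoc]
    rfl
  rw [Matrix.star_mulVec, Matrix.mulVec_mulVec]
  rw [← Matrix.dotProduct_mulVec, Matrix.mulVec_mulVec, ← Matrix.mul_assoc, hMH]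
  exact dot_allDown _

lemma siteOpZ_mul_W {N : ℕ} (k : Fin N) :
    siteOp N k pauliZ * W N = W N * siteOp N k pauliX := by
  have h : siteOp N k pauliX * W N = W N * siteOp N k pauliZ := by
    rw [siteOpX_mul_W, siteOpZ_eq]
  calc siteOp N k pauliZ * W N
      = (W N * W N) * (siteOp N k pauliZ * W N) := by rw [W_mul_W, Matrix.one_mul]
    _ = W N * (W N * siteOp N k pauliZ) * W N := by simp only [Matrix.mul_assoc]
    _ = W N * (siteOp N k pauliX * W N) * W N := by rw [h]
    _ = W N * siteOp N k pauliX * (W N * W N) := by simp only [Matrix.mul_assoc]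
    _ = W N * siteOp N k pauliX := by rw [W_mul_W, Matrix.mul_one]

lemma W_ZZ_W {N : ℕ} (k0 k1 : Fin N) :
    W N * (siteOp N k0 pauliZ * siteOp N k1 pauliZ) * W N
      = siteOp N k0 pauliX * siteOp N k1 pauliX := by
  have h : siteOp N k0 pauliZ * siteOp N k1 pauliZ * W N
      = W N * (siteOp N k0 pauliX * siteOp N k1 pauliX) := by
    calc siteOp N k0 pauliZ * siteOp N k1 pauliZ * W N
        = siteOp N k0 pauliZ * (siteOp N k1 pauliZ * W N) := by rw [Matrix.mul_assoc]
      _ = siteOp N k0 pauliZ * W N * siteOp N k1 pauliX := by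
          rw [siteOpZ_mul_W, Matrix.mul_assoc]
      _ = W N * siteOp N k0 pauliX * siteOp N k1 pauliX := by rw [siteOpZ_mul_W]
      _ = _ := by rw [Matrix.mul_assoc]
  calc W N * (siteOp N k0 pauliZ * siteOp N k1 pauliZ) * W N
      = W N * (siteOp N k0 pauliZ * siteOp N k1 pauliZ * W N) := by
        simp only [Matrix.mul_assoc]
    _ = W N * W N * (siteOp N k0 pauliX * siteOp N k1 pauliX) := by
        rw [h, ← Matrix.mul_assoc]
    _ = _ := by rw [W_mul_W, Matrix.one_mul]

lemma siteOpXX_apply {N : ℕ} (k0 k1 : Fin N) (s t : Fin N → Fin 2) :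
    (siteOp N k0 pauliX * siteOp N k1 pauliX) s t
      = if t = flipAt k1 (flipAt k0 s) then 1 else 0 := by
  rw [Matrix.mul_apply]
  simp only [siteOpX_apply]
  simp only [ite_mul, one_mul, zero_mul]
  rw [Finset.sum_ite_eq' Finset.univ (flipAt k0 s)
    (fun u => if t = flipAt k1 u then (1:ℂ) else 0)]
  rw [if_pos (Finset.mem_univ _)]

lemma prod_split {N : ℕ} (k0 k1 : Fin N) (h01 : k0 ≠ k1) (g : Fin N → ℂ) :
    ∏ j, g j = g k0 * g k1 * ∏ j ∈ (Finset.univ.erase k0).erase k1, g j := by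
  rw [← Finset.mul_prod_erase Finset.univ g (Finset.mem_univ k0),
      ← Finset.mul_prod_erase (Finset.univ.erase k0) g
        (Finset.mem_erase.mpr ⟨h01.symm, Finset.mem_univ k1⟩),
      mul_assoc]

lemma sum_split {N : ℕ} (k0 k1 : Fin N) (h01 : k0 ≠ k1) (g : Fin N → ℂ) :
    ∑ j, g j = g k0 + g k1 + ∑ j ∈ (Finset.univ.erase k0).erase k1, g j := by
  rw [← Finset.add_sum_erase Finset.univ g (Finset.mem_univ k0),
      ← Finset.add_sum_erase (Finset.univ.erase k0) g
        (Finset.mem_erase.mpr ⟨h01.symm, Finset.mem_univ k1⟩),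
      add_assoc]

lemma W_one_mul {N : ℕ} (k0 k1 : Fin N) (h01 : k0 ≠ k1) (s : Fin N → Fin 2) :
    W N (fun _ => 1) s * W N (flipAt k1 (flipAt k0 s)) (fun _ => 1) = (2⁻¹ : ℂ) ^ N := by
  set T := flipAt k1 (flipAt k0 s) with hT
  have hTk0 : T k0 = flip2 (s k0) := by
    rw [hT, flipAt_apply_ne _ _ _ h01, flipAt_apply_self]
  have hTk1 : T k1 = flip2 (s k1) := by
    rw [hT, flipAt_apply_self, flipAt_apply_ne _ _ _ h01.symm]
  have hTj : ∀ j, j ≠ k0 → j ≠ k1 → T j = s j := fun j h0 h1 => by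
    rw [hT, flipAt_apply_ne _ _ _ h1, flipAt_apply_ne _ _ _ h0]
  rw [W_apply, W_apply]
  have h1 : ∏ j, w2 ((fun _ => (1 : Fin 2)) j) (s j) = ∏ j, χ (s j) :=
    Finset.prod_congr rfl fun j _ => one_w2 _
  have h2 : ∏ j, w2 (T j) ((fun _ => (1 : Fin 2)) j) = ∏ j, χ (T j) :=
    Finset.prod_congr rfl fun j _ => w2_one _
  rw [h1, h2]
  have h3 : (∏ j, χ (s j)) * ∏ j, χ (T j) = ∏ j, (χ (s j) * χ (T j)) :=
    (Finset.prod_mul_distrib).symm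
  have h4 : ∏ j, (χ (s j) * χ (T j)) = 1 := by
    rw [prod_split k0 k1 h01, hTk0, hTk1, χ_mul_χ_flip2, χ_mul_χ_flip2]
    rw [Finset.prod_eq_one fun j hj => by
      rw [hTj j (Finset.mem_erase.mp (Finset.mem_of_mem_erase hj)).1
        (Finset.mem_erase.mp hj).1, χ_sq]]
    ring
  calc rt ^ N * (∏ j, χ (s j)) * (rt ^ N * ∏ j, χ (T j))
      = (rt * rt) ^ N * ((∏ j, χ (s j)) * ∏ j, χ (T j)) := by ring
    _ = (2⁻¹ : ℂ) ^ N := by rw [h3, h4, rt_sq, mul_one]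

lemma Λ_T {N : ℕ} (k0 k1 : Fin N) (h01 : k0 ≠ k1) (s : Fin N → Fin 2) :
    Λ (flipAt k1 (flipAt k0 s)) = Λ s - (χ (s k0) + χ (s k1)) := by
  set T := flipAt k1 (flipAt k0 s) with hT
  have hTk0 : T k0 = flip2 (s k0) := by
    rw [hT, flipAt_apply_ne _ _ _ h01, flipAt_apply_self]
  have hTk1 : T k1 = flip2 (s k1) := by
    rw [hT, flipAt_apply_self, flipAt_apply_ne _ _ _ h01.symm]
  have hTj : ∀ j, j ≠ k0 → j ≠ k1 → T j = s j := fun j h0 h1 => by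
    rw [hT, flipAt_apply_ne _ _ _ h1, flipAt_apply_ne _ _ _ h0]
  rw [Λ, Λ, sum_split k0 k1 h01 (fun j => χ (T j)), sum_split k0 k1 h01 (fun j => χ (s j))]
  have hrest : ∑ j ∈ (Finset.univ.erase k0).erase k1, χ (T j)
      = ∑ j ∈ (Finset.univ.erase k0).erase k1, χ (s j) :=
    Finset.sum_congr rfl fun j hj => by
      rw [hTj j (Finset.mem_erase.mp (Finset.mem_of_mem_erase hj)).1
        (Finset.mem_erase.mp hj).1]
  rw [hrest, hTk0, hTk1, χ_flip2, χ_flip2]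
  ring

lemma conj_Λ {N : ℕ} (s : Fin N → Fin 2) : (starRingEnd ℂ) (Λ s) = Λ s := by
  rw [Λ, map_div₀, map_sum]
  simp only [conj_χ, Complex.conj_ofReal, map_ofNat]

lemma conj_cc (θ : ℝ) : (starRingEnd ℂ) (cc θ) = -(cc θ) := by
  simp only [cc, _root_.map_mul, map_neg, map_div₀, Complex.conj_I, Complex.conj_ofReal,
    map_ofNat]
  ring

lemma conj_ff {N : ℕ} (θ : ℝ) (s : Fin N → Fin 2) :
    (starRingEnd ℂ) (ff N θ s) = Complex.exp (-(cc θ) * Λ s ^ 2) := by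
  rw [ff, ← Complex.exp_conj, _root_.map_mul, map_pow, conj_Λ, conj_cc]

lemma conj_ff_mul {N : ℕ} (θ : ℝ) (k0 k1 : Fin N) (h01 : k0 ≠ k1) (s : Fin N → Fin 2) :
    (starRingEnd ℂ) (ff N θ s) * ff N θ (flipAt k1 (flipAt k0 s))
      = Complex.exp ((-(cc θ)) * ((χ (s k0) + χ (s k1)) *
          ∑ j ∈ (Finset.univ.erase k0).erase k1, χ (s j))) := by
  rw [conj_ff, ff, ← Complex.exp_add, Λ_T k0 k1 h01]
  congr 1
  have hΛ : Λ s = ((χ (s k0) + χ (s k1)) +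
      ∑ j ∈ (Finset.univ.erase k0).erase k1, χ (s j)) / 2 := by
    rw [Λ, sum_split k0 k1 h01]
  rw [hΛ]
  ring

/-- factorized integrand -/
def Hfun {N : ℕ} (k0 k1 : Fin N) (κ : ℂ) (a b : Fin 2) (j : Fin N) (v : Fin 2) : ℂ :=
  if j = k0 then (if a = v then 1 else 0)
  else if j = k1 then (if b = v then 1 else 0)
  else Complex.exp (κ * (χ a + χ b) * χ v)

lemma sum_core {N : ℕ} (k0 k1 : Fin N) (h01 : k0 ≠ k1) (κ : ℂ) :
    ∑ s : Fin N → Fin 2, Complex.exp (κ * ((χ (s k0) + χ (s k1)) *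
        ∑ j ∈ (Finset.univ.erase k0).erase k1, χ (s j)))
      = ∑ a : Fin 2, ∑ b : Fin 2,
          (Complex.exp (κ * (χ a + χ b)) + Complex.exp (-(κ * (χ a + χ b)))) ^ (N - 2) := by
  have hH : ∀ (a b : Fin 2) (s : Fin N → Fin 2), (∏ j, Hfun k0 k1 κ a b j (s j))
      = if a = s k0 then (if b = s k1 then
          ∏ j ∈ (Finset.univ.erase k0).erase k1,
            Complex.exp (κ * (χ a + χ b) * χ (s j)) else 0) else 0 := by
    intro a b s
    rw [prod_split k0 k1 h01]
    have e0 : Hfun k0 k1 κ a b k0 (s k0) = if a = s k0 then 1 else 0 := if_pos rfl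
    have e1 : Hfun k0 k1 κ a b k1 (s k1) = if b = s k1 then 1 else 0 := by
      rw [Hfun, if_neg h01.symm, if_pos rfl]
    have e2 : ∏ j ∈ (Finset.univ.erase k0).erase k1, Hfun k0 k1 κ a b j (s j)
        = ∏ j ∈ (Finset.univ.erase k0).erase k1,
            Complex.exp (κ * (χ a + χ b) * χ (s j)) :=
      Finset.prod_congr rfl fun j hj => by
        rw [Hfun, if_neg (Finset.mem_erase.mp (Finset.mem_of_mem_erase hj)).1,
          if_neg (Finset.mem_erase.mp hj).1]
    rw [e0, e1, e2]
    by_cases ha : a = s k0 <;> by_cases hb : b = s k1 <;> simp [ha, hb]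
  have hsummand : ∀ s : Fin N → Fin 2,
      Complex.exp (κ * ((χ (s k0) + χ (s k1)) *
        ∑ j ∈ (Finset.univ.erase k0).erase k1, χ (s j)))
      = ∑ a : Fin 2, ∑ b : Fin 2, ∏ j, Hfun k0 k1 κ a b j (s j) := by
    intro s
    have e1 : κ * ((χ (s k0) + χ (s k1)) *
        ∑ j ∈ (Finset.univ.erase k0).erase k1, χ (s j))
        = ∑ j ∈ (Finset.univ.erase k0).erase k1,
            κ * (χ (s k0) + χ (s k1)) * χ (s j) := by
      rw [Finset.mul_sum, Finset.mul_sum]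
      exact Finset.sum_congr rfl fun j _ => (mul_assoc _ _ _).symm
    rw [e1, Complex.exp_sum]
    rw [Finset.sum_congr rfl fun a _ => Finset.sum_congr rfl fun b _ => hH a b s]
    have hcollapse : ∀ a : Fin 2, (∑ b : Fin 2, if a = s k0 then (if b = s k1 then
        (∏ j ∈ (Finset.univ.erase k0).erase k1,
          Complex.exp (κ * (χ a + χ b) * χ (s j))) else 0) else 0)
        = if a = s k0 then ∏ j ∈ (Finset.univ.erase k0).erase k1,
            Complex.exp (κ * (χ a + χ (s k1)) * χ (s j)) else 0 := by
      intro a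
      by_cases ha : a = s k0
      · simp only [ha, if_true, eq_self_iff_true]
        rw [Finset.sum_ite_eq' Finset.univ (s k1)
          (fun b => ∏ j ∈ (Finset.univ.erase k0).erase k1,
            Complex.exp (κ * (χ (s k0) + χ b) * χ (s j)))]
        simp
      · simp [ha]
    rw [Finset.sum_congr rfl fun a _ => hcollapse a]
    rw [Finset.sum_ite_eq' Finset.univ (s k0)
      (fun a => ∏ j ∈ (Finset.univ.erase k0).erase k1,
        Complex.exp (κ * (χ a + χ (s k1)) * χ (s j)))]
    simp
  rw [Finset.sum_congr rfl fun s _ => hsummand s]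
  rw [Finset.sum_comm]
  refine Finset.sum_congr rfl fun a _ => ?_
  rw [Finset.sum_comm]
  refine Finset.sum_congr rfl fun b _ => ?_
  -- now: ∑ s, ∏ j, Hfun = K ^ (N-2)
  rw [← Fintype.piFinset_univ, ← Finset.prod_univ_sum]
  rw [prod_split k0 k1 h01 (fun j => ∑ v : Fin 2, Hfun k0 k1 κ a b j v)]
  have e0 : ∑ v : Fin 2, Hfun k0 k1 κ a b k0 v = 1 := by
    simp [Hfun]
  have e1 : ∑ v : Fin 2, Hfun k0 k1 κ a b k1 v = 1 := by
    simp [Hfun, h01.symm]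
  have e2 : ∏ j ∈ (Finset.univ.erase k0).erase k1, (∑ v : Fin 2, Hfun k0 k1 κ a b j v)
      = (Complex.exp (κ * (χ a + χ b)) + Complex.exp (-(κ * (χ a + χ b)))) ^ (N - 2) := by
    have hval : ∀ j ∈ (Finset.univ.erase k0).erase k1,
        (∑ v : Fin 2, Hfun k0 k1 κ a b j v)
        = Complex.exp (κ * (χ a + χ b)) + Complex.exp (-(κ * (χ a + χ b))) := by
      intro j hj
      rw [Finset.sum_congr rfl fun v _ => show Hfun k0 k1 κ a b j v
          = Complex.exp (κ * (χ a + χ b) * χ v) from by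
        rw [Hfun, if_neg (Finset.mem_erase.mp (Finset.mem_of_mem_erase hj)).1,
          if_neg (Finset.mem_erase.mp hj).1]]
      rw [Fin.sum_univ_two, χ_zero, χ_one, mul_one, mul_neg_one]
    rw [Finset.prod_congr rfl hval, Finset.prod_const]
    congr 1
    rw [Finset.card_erase_of_mem (Finset.mem_erase.mpr ⟨h01.symm, Finset.mem_univ k1⟩),
      Finset.card_erase_of_mem (Finset.mem_univ k0), Finset.card_univ, Fintype.card_fin]
    omega
  rw [e0, e1, e2, one_mul, one_mul]

lemma entry_eval {N : ℕ} (θ : ℝ) (k0 k1 : Fin N) (h01 : k0 ≠ k1) :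
    (W N * (Matrix.diagonal (fun s => (starRingEnd ℂ) (ff N θ s)) *
      ((siteOp N k0 pauliX * siteOp N k1 pauliX) * Matrix.diagonal (ff N θ))) * W N)
      (fun _ => 1) (fun _ => 1)
    = (2⁻¹ : ℂ) ^ N * ∑ s : Fin N → Fin 2,
        Complex.exp ((-(cc θ)) * ((χ (s k0) + χ (s k1)) *
          ∑ j ∈ (Finset.univ.erase k0).erase k1, χ (s j))) := by
  set B := Matrix.diagonal (fun s => (starRingEnd ℂ) (ff N θ s)) *
      ((siteOp N k0 pauliX * siteOp N k1 pauliX) * Matrix.diagonal (ff N θ)) with hBdef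
  have hB : ∀ s t : Fin N → Fin 2, B s t =
      if t = flipAt k1 (flipAt k0 s) then
        (starRingEnd ℂ) (ff N θ s) * ff N θ t else 0 := by
    intro s t
    rw [hBdef, Matrix.diagonal_mul, Matrix.mul_diagonal, siteOpXX_apply]
    by_cases h : t = flipAt k1 (flipAt k0 s) <;> simp [h] <;> ring
  have hBW : ∀ s : Fin N → Fin 2, (B * W N) s (fun _ => 1)
      = (starRingEnd ℂ) (ff N θ s) * ff N θ (flipAt k1 (flipAt k0 s)) *
        W N (flipAt k1 (flipAt k0 s)) (fun _ => 1) := by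
    intro s
    rw [Matrix.mul_apply]
    rw [Finset.sum_congr rfl fun t _ => by rw [hB s t, ite_mul, zero_mul]]
    rw [Finset.sum_ite_eq' Finset.univ (flipAt k1 (flipAt k0 s))
      (fun t => (starRingEnd ℂ) (ff N θ s) * ff N θ t * W N t (fun _ => 1))]
    simp
  rw [Matrix.mul_assoc, Matrix.mul_apply]
  rw [Finset.sum_congr rfl fun s _ => by rw [hBW s]]
  rw [Finset.sum_congr rfl fun s (_ : s ∈ Finset.univ) => show
      W N (fun _ => 1) s * ((starRingEnd ℂ) (ff N θ s) * ff N θ (flipAt k1 (flipAt k0 s)) *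
        W N (flipAt k1 (flipAt k0 s)) (fun _ => 1))
      = (2⁻¹ : ℂ) ^ N * Complex.exp ((-(cc θ)) * ((χ (s k0) + χ (s k1)) *
          ∑ j ∈ (Finset.univ.erase k0).erase k1, χ (s j))) from by
    rw [← conj_ff_mul θ k0 k1 h01 s, ← W_one_mul k0 k1 h01 s]
    ring]
  rw [← Finset.mul_sum]

lemma final {N : ℕ} (θ : ℝ) (k0 k1 : Fin N) (h01 : k0 ≠ k1) :
    expVal N θ (siteOp N k0 pauliZ * siteOp N k1 pauliZ)
      = (2⁻¹ : ℂ) ^ N * ∑ a : Fin 2, ∑ b : Fin 2,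
          (Complex.exp (-(cc θ) * (χ a + χ b))
            + Complex.exp (-(-(cc θ) * (χ a + χ b)))) ^ (N - 2) := by
  rw [expVal_eq_entry]
  have hassoc : (W N * Matrix.diagonal (fun s => (starRingEnd ℂ) (ff N θ s)) * W N) *
      (siteOp N k0 pauliZ * siteOp N k1 pauliZ) *
      (W N * Matrix.diagonal (ff N θ) * W N)
      = W N * (Matrix.diagonal (fun s => (starRingEnd ℂ) (ff N θ s)) *
          ((W N * (siteOp N k0 pauliZ * siteOp N k1 pauliZ) * W N) *
            Matrix.diagonal (ff N θ))) * W N := by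
    simp only [Matrix.mul_assoc]
  rw [hassoc, W_ZZ_W k0 k1, entry_eval θ k0 k1 h01, sum_core k0 k1 h01]

end OATaux

/-- For the one-axis twisted state on `N ≥ 2` qubits,
`⟨σ_{1z} σ_{2z}⟩ = (1 + cos^{N-2} θ)/2`. -/
theorem oneAxisTwisted_sigma_zz (N : ℕ) (hN : 2 ≤ N) (θ : ℝ) :
    expVal N θ (siteOp N ⟨0, by omega⟩ pauliZ * siteOp N ⟨1, by omega⟩ pauliZ) =
      (1 + ((Real.cos θ : ℂ)) ^ (N - 2)) / 2 := by
  obtain ⟨n, rfl⟩ : ∃ n, N = n + 2 := ⟨N - 2, by omega⟩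
  rw [OATaux.final θ _ _ (by simp [Fin.ext_iff] : (⟨0, by omega⟩ : Fin (n+2)) ≠ ⟨1, by omega⟩)]
  simp only [Fin.sum_univ_two, OATaux.χ_zero, OATaux.χ_one, Nat.add_sub_cancel]
  have h1 : -(OATaux.cc θ) * ((1:ℂ) + 1) = (θ:ℂ) * I := by rw [OATaux.cc]; ring
  have h2 : -(OATaux.cc θ) * ((1:ℂ) + -1) = 0 := by ring
  have h3 : -(OATaux.cc θ) * ((-1:ℂ) + 1) = 0 := by ring
  have h4 : -(OATaux.cc θ) * ((-1:ℂ) + -1) = -((θ:ℂ) * I) := by rw [OATaux.cc]; ring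
  rw [h1, h2, h3, h4, neg_neg, neg_zero, Complex.exp_zero]
  rw [show -((θ:ℂ)*I) = (-(θ:ℂ))*I from by ring]
  have hx : Complex.cos (θ:ℂ) = (Complex.exp ((θ:ℂ)*I) + Complex.exp ((-(θ:ℂ))*I))/2 := rfl
  have hcos : Complex.exp ((θ:ℂ)*I) + Complex.exp ((-(θ:ℂ))*I) = 2 * Complex.cos (θ:ℂ) := by
    rw [hx]; ring
  rw [hcos, show Complex.exp ((-(θ:ℂ))*I) + Complex.exp ((θ:ℂ)*I)
      = 2 * Complex.cos (θ:ℂ) from by rw [← hcos]; ring]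
  rw [show ((Real.cos θ : ℝ) : ℂ) = Complex.cos (θ:ℂ) from Complex.ofReal_cos θ]
  have h2n : ((2:ℂ)⁻¹) ^ n * 2 ^ n = 1 := by rw [← mul_pow]; norm_num
  set x := Complex.cos (θ:ℂ)
  linear_combination ((x ^ n + 1) / 2) * h2n


end OneAxisTwisting
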